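/- For the Hardy–Weinberg model with I ≥ 4 alleles (cells indexed by unordered pairs {i,j} with 1 ≤ i ≤ j ≤ I, and A x ∈ ℤ^I given by t_i = 2x_{ii} + Σ_{j ≠ i} x_{ij}, where x_{ij} = x_{ji}), let i₁, i₂, i₃, i₄ be pairwise distinct. Then the fiber of t = A(e_{i₁i₂}+e_{i₃i₄}) is exactly the three-element set {e_{i₁i₂}+e_{i₃i₄}, e_{i₁i₃}+e_{i₂i₄}, e_{i₁i₄}+e_{i₂i₃}}, and each of these three frequency vectors is an indispensable monomial. -/

import Mathlib

open scoped BigOperators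

section Defs

variable {ι κ : Type*} [Fintype ι]

/-- Embed a frequency vector `x ∈ ℕ^ι` into `ℤ^ι`. -/
def natToInt (x : ι → ℕ) : ι → ℤ := fun i => (x i : ℤ)

/-- The fiber of `t`: all frequency vectors `x` with `A x = t`. -/
def fiberOf (A : Matrix κ ι ℤ) (t : κ → ℤ) : Set (ι → ℕ) :=
  {x | A.mulVec (natToInt x) = t}

/-- A move for `A`: an integer vector in the kernel of `A`. -/
def IsMove (A : Matrix κ ι ℤ) (z : ι → ℤ) : Prop := A.mulVec z = 0

/-- The positive part `z⁺` of an integer vector, as a frequency vector. -/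
def posOf (z : ι → ℤ) : ι → ℕ := fun i => (z i).toNat

/-- The negative part `z⁻` of an integer vector, as a frequency vector. -/
def negOf (z : ι → ℤ) : ι → ℕ := fun i => (-z i).toNat

/-- The degree of a move: `deg z = |z⁺|`. -/
def degOf (z : ι → ℤ) : ℕ := ∑ i, posOf z i

/-- One step: add or subtract one move of `B`, staying in `ℕ^ι`. -/
def MStep (B : Set (ι → ℤ)) (x y : ι → ℕ) : Prop :=
  ∃ z ∈ B, natToInt y = natToInt x + z ∨ natToInt y = natToInt x - z

/-- `y` is accessible from `x` by the moves of `B` (staying nonnegative throughout,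
since all intermediate points are frequency vectors). -/
def Accessible (B : Set (ι → ℤ)) : (ι → ℕ) → (ι → ℕ) → Prop :=
  Relation.ReflTransGen (MStep B)

/-- A Markov basis: a finite set of moves such that every fiber forms a single
equivalence class for mutual accessibility. -/
def IsMarkovBasis (A : Matrix κ ι ℤ) (B : Set (ι → ℤ)) : Prop :=
  B.Finite ∧ (∀ z ∈ B, IsMove A z) ∧
    ∀ t : κ → ℤ, ∀ x ∈ fiberOf A t, ∀ y ∈ fiberOf A t, Accessible B x y

/-- A minimal Markov basis: no proper subset is a Markov basis. -/
def IsMinimalMarkovBasis (A : Matrix κ ι ℤ) (B : Set (ι → ℤ)) : Prop :=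
  IsMarkovBasis A B ∧ ∀ B' ⊂ B, ¬ IsMarkovBasis A B'

/-- An indispensable monomial: every Markov basis contains a move whose
positive or negative part is `x`. -/
def IsIndispensableMonomial (A : Matrix κ ι ℤ) (x : ι → ℕ) : Prop :=
  ∀ B : Set (ι → ℤ), IsMarkovBasis A B → ∃ z ∈ B, posOf z = x ∨ negOf z = x

/-- `B_n`: the set of moves of degree at most `n`. -/
def Bmoves (A : Matrix κ ι ℤ) (n : ℕ) : Set (ι → ℤ) :=
  {z | IsMove A z ∧ degOf z ≤ n}

/-- The sample size `|t|` of a sufficient statistic `t` (well defined on nonempty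
fibers under homogeneity). -/
noncomputable def sampleSize (A : Matrix κ ι ℤ) (t : κ → ℤ) : ℕ :=
  sInf {n | ∃ x ∈ fiberOf A t, ∑ i, x i = n}

/-- The `B_{|t|-1}`-equivalence classes of the fiber of `t`. -/
noncomputable def fiberClasses (A : Matrix κ ι ℤ) (t : κ → ℤ) : Set (Set (ι → ℕ)) :=
  {C | ∃ x ∈ fiberOf A t,
    C = {y | y ∈ fiberOf A t ∧ Accessible (Bmoves A (sampleSize A t - 1)) x y}}

/-- Homogeneity: some rational vector `w` has `w ⬝ aᵢ = 1` for every column `aᵢ`. -/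
def IsHomogeneousMatrix [Fintype κ] (A : Matrix κ ι ℤ) : Prop :=
  ∃ w : κ → ℚ, ∀ i : ι, ∑ j, w j * (A j i : ℚ) = 1

end Defs

/-- The matrix of the Hardy–Weinberg model with `I` alleles: cells are unordered
pairs of alleles, and `(A x)_i = 2 x_{ii} + ∑_{j ≠ i} x_{ij}`. -/
def AHW (I : ℕ) : Matrix (Fin I) (Sym2 (Fin I)) ℤ :=
  fun i s => if s = Sym2.mk i i then 2 else if i ∈ s then 1 else 0

/-- The coordinate frequency vector `e_{ij}` of the cell `{i,j}`. -/
def eHW {I : ℕ} (i j : Fin I) : Sym2 (Fin I) → ℕ := Pi.single (Sym2.mk i j) 1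

namespace HW3

lemma ahw_mk {I : ℕ} (i a b : Fin I) :
    AHW I i (Sym2.mk a b) = (if i = a then 1 else 0) + (if i = b then 1 else 0) := by
  unfold AHW
  by_cases hia : i = a <;> by_cases hib : i = b
  · have h : Sym2.mk a b = Sym2.mk i i := by
      rw [Sym2.eq_iff]; exact Or.inl ⟨hia.symm, hib.symm⟩
    rw [if_pos h, if_pos hia, if_pos hib]; norm_num
  · have h : Sym2.mk a b ≠ Sym2.mk i i := by
      intro hh; rw [Sym2.eq_iff] at hh
      rcases hh with ⟨h1, h2⟩ | ⟨h1, h2⟩ <;> first | exact hib h2.symm | exact hia h1.symm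
    rw [if_neg h, if_pos (Sym2.mem_iff.mpr (Or.inl hia)), if_pos hia, if_neg hib]; norm_num
  · have h : Sym2.mk a b ≠ Sym2.mk i i := by
      intro hh; rw [Sym2.eq_iff] at hh
      rcases hh with ⟨h1, h2⟩ | ⟨h1, h2⟩ <;> first | exact hib h2.symm | exact hia h1.symm
    rw [if_neg h, if_pos (Sym2.mem_iff.mpr (Or.inr hib)), if_neg hia, if_pos hib]; norm_num
  · have h : Sym2.mk a b ≠ Sym2.mk i i := by
      intro hh; rw [Sym2.eq_iff] at hh
      rcases hh with ⟨h1, h2⟩ | ⟨h1, h2⟩ <;> first | exact hib h2.symm | exact hia h1.symm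
    have hm : i ∉ Sym2.mk a b := by
      rw [Sym2.mem_iff]; rintro (h | h) <;> [exact hia h; exact hib h]
    rw [if_neg h, if_neg hm, if_neg hia, if_neg hib]; norm_num

lemma ahw_nonneg {I : ℕ} (i : Fin I) (s : Sym2 (Fin I)) : 0 ≤ AHW I i s := by
  unfold AHW; split_ifs <;> norm_num

lemma ahw_zero {I : ℕ} {i : Fin I} {s : Sym2 (Fin I)} (h : i ∉ s) : AHW I i s = 0 := by
  unfold AHW
  rw [if_neg, if_neg h]
  intro he; exact h (by rw [he]; simp)

lemma mulVec_apply {I : ℕ} (x : Sym2 (Fin I) → ℕ) (i : Fin I) :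
    (AHW I).mulVec (natToInt x) i = ∑ s : Sym2 (Fin I), AHW I i s * (x s : ℤ) := by
  simp [Matrix.mulVec, dotProduct, natToInt]

lemma mulVec_pair {I : ℕ} (a b c d : Fin I) (i : Fin I) :
    (AHW I).mulVec (natToInt (eHW a b + eHW c d)) i
      = AHW I i (Sym2.mk a b) + AHW I i (Sym2.mk c d) := by
  rw [mulVec_apply]
  simp only [Pi.add_apply, eHW, Pi.single_apply]
  push_cast
  simp only [mul_add]
  rw [Finset.sum_add_distrib]
  congr 1 <;> simp [mul_ite]

lemma cell_ne {I : ℕ} {a b c d : Fin I}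
    (h : ¬((a = c ∧ b = d) ∨ (a = d ∧ b = c))) :
    Sym2.mk a b ≠ Sym2.mk c d := by
  intro hh; rw [Sym2.eq_iff] at hh; exact h hh

lemma row_sum {I : ℕ} (x : Sym2 (Fin I) → ℕ) (j k l m : Fin I)
    (hjk : j ≠ k) (hjl : j ≠ l) (hjm : j ≠ m)
    (hkl : k ≠ l) (hkm : k ≠ m) (hlm : l ≠ m)
    (h0 : ∀ s : Sym2 (Fin I), ∀ i ∈ s, i ≠ j → i ≠ k → i ≠ l → i ≠ m → x s = 0)
    (hdiag : x (Sym2.mk j j) = 0) :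
    ∑ s : Sym2 (Fin I), AHW I j s * (x s : ℤ)
      = x (Sym2.mk j k) + x (Sym2.mk j l) + x (Sym2.mk j m) := by
  have d1 : Sym2.mk j k ≠ Sym2.mk j l := cell_ne (by tauto)
  have d2 : Sym2.mk j k ≠ Sym2.mk j m := cell_ne (by tauto)
  have d3 : Sym2.mk j l ≠ Sym2.mk j m := cell_ne (by tauto)
  have hT : ∑ s : Sym2 (Fin I), AHW I j s * (x s : ℤ)
      = ∑ s ∈ ({Sym2.mk j k, Sym2.mk j l, Sym2.mk j m} :
          Finset (Sym2 (Fin I))), AHW I j s * (x s : ℤ) := by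
    refine (Finset.sum_subset (Finset.subset_univ _) ?_).symm
    intro s _ hs
    simp only [Finset.mem_insert, Finset.mem_singleton] at hs
    push_neg at hs
    obtain ⟨hs1, hs2, hs3⟩ := hs
    by_cases hmem : j ∈ s
    · obtain ⟨c, rfl⟩ := Sym2.mem_iff_exists.mp hmem
      by_cases hcj : c = j
      · subst hcj; rw [hdiag]; ring
      by_cases hck : c = k
      · exact absurd (by rw [hck]) hs1
      by_cases hcl : c = l
      · exact absurd (by rw [hcl]) hs2
      by_cases hcm : c = m
      · exact absurd (by rw [hcm]) hs3
      · rw [h0 _ c (Sym2.mem_mk_right j c) hcj hck hcl hcm]; ring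
    · rw [ahw_zero hmem]; ring
  rw [hT, Finset.sum_insert (by simp [d1, d2]),
    Finset.sum_insert (by simp [d3]), Finset.sum_singleton]
  rw [ahw_mk, ahw_mk, ahw_mk, if_pos rfl, if_neg hjk, if_neg hjl, if_neg hjm]
  push_cast; ring

lemma fiber_step {ι κ : Type*} [Fintype ι] {A : Matrix κ ι ℤ} {t : κ → ℤ}
    {B : Set (ι → ℤ)} (hB : ∀ z ∈ B, IsMove A z) {x c : ι → ℕ}
    (hx : x ∈ fiberOf A t) (h : MStep B x c) : c ∈ fiberOf A t := by
  obtain ⟨z, hz, hc | hc⟩ := h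
  · show A.mulVec (natToInt c) = t
    rw [hc, Matrix.mulVec_add, hB z hz, hx]; simp
  · show A.mulVec (natToInt c) = t
    rw [hc, Matrix.mulVec_sub, hB z hz, hx]; simp

lemma first_step {ι κ : Type*} [Fintype ι] {A : Matrix κ ι ℤ} {t : κ → ℤ}
    {B : Set (ι → ℤ)} (hB : ∀ z ∈ B, IsMove A z) {x y : ι → ℕ}
    (hx : x ∈ fiberOf A t) (hacc : Accessible B x y) (hxy : y ≠ x) :
    ∃ z ∈ B, ∃ x' ∈ fiberOf A t, x' ≠ x ∧
      (natToInt x' = natToInt x + z ∨ natToInt x' = natToInt x - z) := by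
  have H : ∀ a : ι → ℕ, Accessible B a y → a ∈ fiberOf A t → y ≠ a →
      ∃ z ∈ B, ∃ x' ∈ fiberOf A t, x' ≠ a ∧
        (natToInt x' = natToInt a + z ∨ natToInt x' = natToInt a - z) := by
    intro a hacc
    induction hacc using Relation.ReflTransGen.head_induction_on with
    | refl => intro _ hy; exact absurd rfl hy
    | head h' hrt ih =>
      rename_i a c
      intro ha hya
      by_cases hca : c = a
      · subst hca; exact ih ha hya
      · obtain ⟨z, hz, hc⟩ := h'
        exact ⟨z, hz, c, fiber_step hB ha ⟨z, hz, hc⟩, hca, hc⟩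
  exact H x hacc hx hxy

lemma eval_pair {I : ℕ} (a b c d : Fin I) (s : Sym2 (Fin I)) :
    (eHW a b + eHW c d) s
      = (if s = Sym2.mk a b then 1 else 0) + (if s = Sym2.mk c d then 1 else 0) := by
  simp [eHW, Pi.single_apply]

lemma indis_of {ι κ : Type*} [Fintype ι] {A : Matrix κ ι ℤ} {t : κ → ℤ}
    {B : Set (ι → ℤ)} (hB : IsMarkovBasis A B) {x y : ι → ℕ}
    (hx : x ∈ fiberOf A t) (hy : y ∈ fiberOf A t) (hxy : y ≠ x)
    (hdisj : ∀ x' ∈ fiberOf A t, x' ≠ x → ∀ s, x s = 0 ∨ x' s = 0) :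
    ∃ z ∈ B, posOf z = x ∨ negOf z = x := by
  obtain ⟨hfin, hmoves, hconn⟩ := hB
  obtain ⟨z, hz, x', hx', hne, hcase⟩ :=
    first_step hmoves hx (hconn t x hx y hy) hxy
  refine ⟨z, hz, ?_⟩
  have hd := hdisj x' hx' hne
  rcases hcase with h | h
  · right
    funext s
    have hs := congrFun h s
    have hds := hd s
    simp only [natToInt, Pi.add_apply] at hs
    simp only [negOf]
    omega
  · left
    funext s
    have hs := congrFun h s
    have hds := hd s
    simp only [natToInt, Pi.sub_apply] at hs
    simp only [posOf]
    omega

end HW3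

set_option maxHeartbeats 2000000 in
/-- for the Hardy–Weinberg model with `I ≥ 4` alleles and pairwise
distinct `i₁,i₂,i₃,i₄`, the fiber of `A(e_{i₁i₂}+e_{i₃i₄})` is exactly the listed
three-element set, and each of the three vectors is an indispensable monomial. -/
theorem three_element_fiber_HardyWeinberg
    {I : ℕ} (hI : 4 ≤ I) (i₁ i₂ i₃ i₄ : Fin I)
    (h12 : i₁ ≠ i₂) (h13 : i₁ ≠ i₃) (h14 : i₁ ≠ i₄)
    (h23 : i₂ ≠ i₃) (h24 : i₂ ≠ i₄) (h34 : i₃ ≠ i₄) :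
    fiberOf (AHW I) ((AHW I).mulVec (natToInt (eHW i₁ i₂ + eHW i₃ i₄))) =
      {eHW i₁ i₂ + eHW i₃ i₄, eHW i₁ i₃ + eHW i₂ i₄, eHW i₁ i₄ + eHW i₂ i₃} ∧
    IsIndispensableMonomial (AHW I) (eHW i₁ i₂ + eHW i₃ i₄) ∧
    IsIndispensableMonomial (AHW I) (eHW i₁ i₃ + eHW i₂ i₄) ∧
    IsIndispensableMonomial (AHW I) (eHW i₁ i₄ + eHW i₂ i₃) := by
  classical
  have h21 := h12.symm; have h31 := h13.symm; have h41 := h14.symm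
  have h32 := h23.symm; have h42 := h24.symm; have h43 := h34.symm
  have c12_13 : Sym2.mk i₁ i₂ ≠ Sym2.mk i₁ i₃ := HW3.cell_ne (by tauto)
  have c12_14 : Sym2.mk i₁ i₂ ≠ Sym2.mk i₁ i₄ := HW3.cell_ne (by tauto)
  have c12_23 : Sym2.mk i₁ i₂ ≠ Sym2.mk i₂ i₃ := HW3.cell_ne (by tauto)
  have c12_24 : Sym2.mk i₁ i₂ ≠ Sym2.mk i₂ i₄ := HW3.cell_ne (by tauto)
  have c12_34 : Sym2.mk i₁ i₂ ≠ Sym2.mk i₃ i₄ := HW3.cell_ne (by tauto)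
  have c13_14 : Sym2.mk i₁ i₃ ≠ Sym2.mk i₁ i₄ := HW3.cell_ne (by tauto)
  have c13_23 : Sym2.mk i₁ i₃ ≠ Sym2.mk i₂ i₃ := HW3.cell_ne (by tauto)
  have c13_24 : Sym2.mk i₁ i₃ ≠ Sym2.mk i₂ i₄ := HW3.cell_ne (by tauto)
  have c13_34 : Sym2.mk i₁ i₃ ≠ Sym2.mk i₃ i₄ := HW3.cell_ne (by tauto)
  have c14_23 : Sym2.mk i₁ i₄ ≠ Sym2.mk i₂ i₃ := HW3.cell_ne (by tauto)
  have c14_24 : Sym2.mk i₁ i₄ ≠ Sym2.mk i₂ i₄ := HW3.cell_ne (by tauto)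
  have c14_34 : Sym2.mk i₁ i₄ ≠ Sym2.mk i₃ i₄ := HW3.cell_ne (by tauto)
  have c23_24 : Sym2.mk i₂ i₃ ≠ Sym2.mk i₂ i₄ := HW3.cell_ne (by tauto)
  have c23_34 : Sym2.mk i₂ i₃ ≠ Sym2.mk i₃ i₄ := HW3.cell_ne (by tauto)
  have c24_34 : Sym2.mk i₂ i₄ ≠ Sym2.mk i₃ i₄ := HW3.cell_ne (by tauto)
  have hmem1 : (eHW i₁ i₂ + eHW i₃ i₄) ∈
      fiberOf (AHW I) ((AHW I).mulVec (natToInt (eHW i₁ i₂ + eHW i₃ i₄))) := rfl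
  have hmem2 : (eHW i₁ i₃ + eHW i₂ i₄) ∈
      fiberOf (AHW I) ((AHW I).mulVec (natToInt (eHW i₁ i₂ + eHW i₃ i₄))) := by
    simp only [fiberOf, Set.mem_setOf_eq]
    funext i
    rw [HW3.mulVec_pair, HW3.mulVec_pair, HW3.ahw_mk, HW3.ahw_mk, HW3.ahw_mk, HW3.ahw_mk]
    ring
  have hmem3 : (eHW i₁ i₄ + eHW i₂ i₃) ∈
      fiberOf (AHW I) ((AHW I).mulVec (natToInt (eHW i₁ i₂ + eHW i₃ i₄))) := by
    simp only [fiberOf, Set.mem_setOf_eq]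
    funext i
    rw [HW3.mulVec_pair, HW3.mulVec_pair, HW3.ahw_mk, HW3.ahw_mk, HW3.ahw_mk, HW3.ahw_mk]
    ring
  have hsub : ∀ x ∈ fiberOf (AHW I) ((AHW I).mulVec (natToInt (eHW i₁ i₂ + eHW i₃ i₄))),
      x = eHW i₁ i₂ + eHW i₃ i₄ ∨ x = eHW i₁ i₃ + eHW i₂ i₄ ∨ x = eHW i₁ i₄ + eHW i₂ i₃ := by
    intro x hx
    simp only [fiberOf, Set.mem_setOf_eq] at hx
    have hE : ∀ i, ∑ s : Sym2 (Fin I), AHW I i s * (x s : ℤ)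
        = (if i = i₁ then 1 else 0) + (if i = i₂ then 1 else 0)
          + (if i = i₃ then 1 else 0) + (if i = i₄ then 1 else 0) := by
      intro i
      have h := congrFun hx i
      rw [HW3.mulVec_apply, HW3.mulVec_pair, HW3.ahw_mk, HW3.ahw_mk] at h
      rw [h]; ring
    have term_le : ∀ (i : Fin I) (s : Sym2 (Fin I)),
        AHW I i s * (x s : ℤ) ≤ ∑ s' : Sym2 (Fin I), AHW I i s' * (x s' : ℤ) := by
      intro i s
      exact Finset.single_le_sum
        (fun s' _ => mul_nonneg (HW3.ahw_nonneg i s') (by positivity)) (Finset.mem_univ s)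
    have h0 : ∀ s : Sym2 (Fin I), ∀ i ∈ s,
        i ≠ i₁ → i ≠ i₂ → i ≠ i₃ → i ≠ i₄ → x s = 0 := by
      intro s i his hn1 hn2 hn3 hn4
      have hle := term_le i s
      rw [hE i, if_neg hn1, if_neg hn2, if_neg hn3, if_neg hn4] at hle
      obtain ⟨c, rfl⟩ := Sym2.mem_iff_exists.mp his
      rw [HW3.ahw_mk, if_pos rfl] at hle
      split_ifs at hle <;> omega
    have hdiagQ : ∀ i : Fin I, x (Sym2.mk i i) = 0 := by
      intro i
      by_cases hq : i = i₁ ∨ i = i₂ ∨ i = i₃ ∨ i = i₄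
      · have hle := term_le i (Sym2.mk i i)
        rw [HW3.ahw_mk, if_pos rfl, hE i] at hle
        rcases hq with rfl | rfl | rfl | rfl
        · rw [if_pos rfl, if_neg h12, if_neg h13, if_neg h14] at hle; omega
        · rw [if_neg h21, if_pos rfl, if_neg h23, if_neg h24] at hle; omega
        · rw [if_neg h31, if_neg h32, if_pos rfl, if_neg h34] at hle; omega
        · rw [if_neg h41, if_neg h42, if_neg h43, if_pos rfl] at hle; omega
      · push_neg at hq
        exact h0 _ i (by rw [Sym2.mem_iff]; left; rfl) hq.1 hq.2.1 hq.2.2.1 hq.2.2.2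
    have h0' : ∀ s : Sym2 (Fin I), ∀ i ∈ s,
        i ≠ i₂ → i ≠ i₁ → i ≠ i₃ → i ≠ i₄ → x s = 0 :=
      fun s i hi a b c d => h0 s i hi b a c d
    have h0'' : ∀ s : Sym2 (Fin I), ∀ i ∈ s,
        i ≠ i₃ → i ≠ i₁ → i ≠ i₂ → i ≠ i₄ → x s = 0 :=
      fun s i hi a b c d => h0 s i hi b c a d
    have h0''' : ∀ s : Sym2 (Fin I), ∀ i ∈ s,
        i ≠ i₄ → i ≠ i₁ → i ≠ i₂ → i ≠ i₃ → x s = 0 :=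
      fun s i hi a b c d => h0 s i hi b c d a
    have R1 := (HW3.row_sum x i₁ i₂ i₃ i₄ h12 h13 h14 h23 h24 h34 h0 (hdiagQ i₁)).symm.trans (hE i₁)
    rw [if_pos rfl, if_neg h12, if_neg h13, if_neg h14] at R1
    have R2 := (HW3.row_sum x i₂ i₁ i₃ i₄ h21 h23 h24 h13 h14 h34 h0' (hdiagQ i₂)).symm.trans (hE i₂)
    rw [if_neg h21, if_pos rfl, if_neg h23, if_neg h24,
      show Sym2.mk i₂ i₁ = Sym2.mk i₁ i₂ from Sym2.eq_swap] at R2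
    have R3 := (HW3.row_sum x i₃ i₁ i₂ i₄ h31 h32 h34 h12 h14 h24 h0'' (hdiagQ i₃)).symm.trans (hE i₃)
    rw [if_neg h31, if_neg h32, if_pos rfl, if_neg h34,
      show Sym2.mk i₃ i₁ = Sym2.mk i₁ i₃ from Sym2.eq_swap,
      show Sym2.mk i₃ i₂ = Sym2.mk i₂ i₃ from Sym2.eq_swap] at R3
    have R4 := (HW3.row_sum x i₄ i₁ i₂ i₃ h41 h42 h43 h12 h13 h23 h0''' (hdiagQ i₄)).symm.trans (hE i₄)
    rw [if_neg h41, if_neg h42, if_neg h43, if_pos rfl,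
      show Sym2.mk i₄ i₁ = Sym2.mk i₁ i₄ from Sym2.eq_swap,
      show Sym2.mk i₄ i₂ = Sym2.mk i₂ i₄ from Sym2.eq_swap,
      show Sym2.mk i₄ i₃ = Sym2.mk i₃ i₄ from Sym2.eq_swap] at R4
    have hC : ∀ s : Sym2 (Fin I), s ≠ Sym2.mk i₁ i₂ → s ≠ Sym2.mk i₁ i₃ →
        s ≠ Sym2.mk i₁ i₄ → s ≠ Sym2.mk i₂ i₃ → s ≠ Sym2.mk i₂ i₄ →
        s ≠ Sym2.mk i₃ i₄ → x s = 0 := by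
      intro s
      induction s using Sym2.ind with
      | _ p q =>
        intro e1 e2 e3 e4 e5 e6
        by_cases hp : p = i₁ ∨ p = i₂ ∨ p = i₃ ∨ p = i₄
        · by_cases hq : q = i₁ ∨ q = i₂ ∨ q = i₃ ∨ q = i₄
          · rcases hp with rfl | rfl | rfl | rfl <;> rcases hq with rfl | rfl | rfl | rfl <;>
              first
                | exact hdiagQ _
                | (exfalso; first
                    | (apply e1; rw [Sym2.eq_iff]; first | exact Or.inl ⟨rfl, rfl⟩ | exact Or.inr ⟨rfl, rfl⟩)
                    | (apply e2; rw [Sym2.eq_iff]; first | exact Or.inl ⟨rfl, rfl⟩ | exact Or.inr ⟨rfl, rfl⟩)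
                    | (apply e3; rw [Sym2.eq_iff]; first | exact Or.inl ⟨rfl, rfl⟩ | exact Or.inr ⟨rfl, rfl⟩)
                    | (apply e4; rw [Sym2.eq_iff]; first | exact Or.inl ⟨rfl, rfl⟩ | exact Or.inr ⟨rfl, rfl⟩)
                    | (apply e5; rw [Sym2.eq_iff]; first | exact Or.inl ⟨rfl, rfl⟩ | exact Or.inr ⟨rfl, rfl⟩)
                    | (apply e6; rw [Sym2.eq_iff]; first | exact Or.inl ⟨rfl, rfl⟩ | exact Or.inr ⟨rfl, rfl⟩))
          · push_neg at hq
            exact h0 _ q (Sym2.mem_mk_right p q) hq.1 hq.2.1 hq.2.2.1 hq.2.2.2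
        · push_neg at hp
          exact h0 _ p (Sym2.mem_mk_left p q) hp.1 hp.2.1 hp.2.2.1 hp.2.2.2
    have key : (x (Sym2.mk i₁ i₂) = 1 ∧ x (Sym2.mk i₃ i₄) = 1 ∧ x (Sym2.mk i₁ i₃) = 0
          ∧ x (Sym2.mk i₁ i₄) = 0 ∧ x (Sym2.mk i₂ i₃) = 0 ∧ x (Sym2.mk i₂ i₄) = 0)
        ∨ (x (Sym2.mk i₁ i₃) = 1 ∧ x (Sym2.mk i₂ i₄) = 1 ∧ x (Sym2.mk i₁ i₂) = 0
          ∧ x (Sym2.mk i₁ i₄) = 0 ∧ x (Sym2.mk i₂ i₃) = 0 ∧ x (Sym2.mk i₃ i₄) = 0)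
        ∨ (x (Sym2.mk i₁ i₄) = 1 ∧ x (Sym2.mk i₂ i₃) = 1 ∧ x (Sym2.mk i₁ i₂) = 0
          ∧ x (Sym2.mk i₁ i₃) = 0 ∧ x (Sym2.mk i₂ i₄) = 0 ∧ x (Sym2.mk i₃ i₄) = 0) := by
      omega
    rcases key with ⟨k1,k2,k3,k4,k5,k6⟩ | ⟨k1,k2,k3,k4,k5,k6⟩ | ⟨k1,k2,k3,k4,k5,k6⟩
    · left
      funext s
      rw [HW3.eval_pair]
      by_cases e1 : s = Sym2.mk i₁ i₂
      · subst e1; rw [if_pos rfl, if_neg c12_34]; omega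
      by_cases e6 : s = Sym2.mk i₃ i₄
      · subst e6; rw [if_neg e1, if_pos rfl]; omega
      by_cases e2 : s = Sym2.mk i₁ i₃
      · subst e2; rw [if_neg e1, if_neg e6]; omega
      by_cases e3 : s = Sym2.mk i₁ i₄
      · subst e3; rw [if_neg e1, if_neg e6]; omega
      by_cases e4 : s = Sym2.mk i₂ i₃
      · subst e4; rw [if_neg e1, if_neg e6]; omega
      by_cases e5 : s = Sym2.mk i₂ i₄
      · subst e5; rw [if_neg e1, if_neg e6]; omega
      · rw [if_neg e1, if_neg e6, hC s e1 e2 e3 e4 e5 e6]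
    · right; left
      funext s
      rw [HW3.eval_pair]
      by_cases e2 : s = Sym2.mk i₁ i₃
      · subst e2; rw [if_pos rfl, if_neg c13_24]; omega
      by_cases e5 : s = Sym2.mk i₂ i₄
      · subst e5; rw [if_neg e2, if_pos rfl]; omega
      by_cases e1 : s = Sym2.mk i₁ i₂
      · subst e1; rw [if_neg e2, if_neg e5]; omega
      by_cases e3 : s = Sym2.mk i₁ i₄
      · subst e3; rw [if_neg e2, if_neg e5]; omega
      by_cases e4 : s = Sym2.mk i₂ i₃
      · subst e4; rw [if_neg e2, if_neg e5]; omega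
      by_cases e6 : s = Sym2.mk i₃ i₄
      · subst e6; rw [if_neg e2, if_neg e5]; omega
      · rw [if_neg e2, if_neg e5, hC s e1 e2 e3 e4 e5 e6]
    · right; right
      funext s
      rw [HW3.eval_pair]
      by_cases e3 : s = Sym2.mk i₁ i₄
      · subst e3; rw [if_pos rfl, if_neg c14_23]; omega
      by_cases e4 : s = Sym2.mk i₂ i₃
      · subst e4; rw [if_neg e3, if_pos rfl]; omega
      by_cases e1 : s = Sym2.mk i₁ i₂
      · subst e1; rw [if_neg e3, if_neg e4]; omega
      by_cases e2 : s = Sym2.mk i₁ i₃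
      · subst e2; rw [if_neg e3, if_neg e4]; omega
      by_cases e5 : s = Sym2.mk i₂ i₄
      · subst e5; rw [if_neg e3, if_neg e4]; omega
      by_cases e6 : s = Sym2.mk i₃ i₄
      · subst e6; rw [if_neg e3, if_neg e4]; omega
      · rw [if_neg e3, if_neg e4, hC s e1 e2 e3 e4 e5 e6]
  have hfib : fiberOf (AHW I) ((AHW I).mulVec (natToInt (eHW i₁ i₂ + eHW i₃ i₄))) =
      {eHW i₁ i₂ + eHW i₃ i₄, eHW i₁ i₃ + eHW i₂ i₄, eHW i₁ i₄ + eHW i₂ i₃} := by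
    apply Set.eq_of_subset_of_subset
    · intro x hx
      rcases hsub x hx with rfl | rfl | rfl <;> simp
    · intro x hx
      simp only [Set.mem_insert_iff, Set.mem_singleton_iff] at hx
      rcases hx with rfl | rfl | rfl
      exacts [hmem1, hmem2, hmem3]
  have ne21 : eHW i₁ i₃ + eHW i₂ i₄ ≠ eHW i₁ i₂ + eHW i₃ i₄ := by
    intro h
    have h' := congrFun h (Sym2.mk i₁ i₂)
    rw [HW3.eval_pair, HW3.eval_pair, if_neg c12_13, if_neg c12_24,
      if_pos rfl, if_neg c12_34] at h'
    omega
  have ne31 : eHW i₁ i₄ + eHW i₂ i₃ ≠ eHW i₁ i₂ + eHW i₃ i₄ := by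
    intro h
    have h' := congrFun h (Sym2.mk i₁ i₂)
    rw [HW3.eval_pair, HW3.eval_pair, if_neg c12_14, if_neg c12_23,
      if_pos rfl, if_neg c12_34] at h'
    omega
  have d12 : ∀ s, (eHW i₁ i₂ + eHW i₃ i₄) s = 0 ∨ (eHW i₁ i₃ + eHW i₂ i₄) s = 0 := by
    intro s
    by_cases a1 : s = Sym2.mk i₁ i₂
    · right; subst a1; rw [HW3.eval_pair, if_neg c12_13, if_neg c12_24]
    by_cases a2 : s = Sym2.mk i₃ i₄
    · right; subst a2; rw [HW3.eval_pair, if_neg (Ne.symm c13_34), if_neg (Ne.symm c24_34)]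
    · left; rw [HW3.eval_pair, if_neg a1, if_neg a2]
  have d13 : ∀ s, (eHW i₁ i₂ + eHW i₃ i₄) s = 0 ∨ (eHW i₁ i₄ + eHW i₂ i₃) s = 0 := by
    intro s
    by_cases a1 : s = Sym2.mk i₁ i₂
    · right; subst a1; rw [HW3.eval_pair, if_neg c12_14, if_neg c12_23]
    by_cases a2 : s = Sym2.mk i₃ i₄
    · right; subst a2; rw [HW3.eval_pair, if_neg (Ne.symm c14_34), if_neg (Ne.symm c23_34)]
    · left; rw [HW3.eval_pair, if_neg a1, if_neg a2]
  have d23 : ∀ s, (eHW i₁ i₃ + eHW i₂ i₄) s = 0 ∨ (eHW i₁ i₄ + eHW i₂ i₃) s = 0 := by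
    intro s
    by_cases a1 : s = Sym2.mk i₁ i₃
    · right; subst a1; rw [HW3.eval_pair, if_neg c13_14, if_neg c13_23]
    by_cases a2 : s = Sym2.mk i₂ i₄
    · right; subst a2; rw [HW3.eval_pair, if_neg (Ne.symm c14_24), if_neg (Ne.symm c23_24)]
    · left; rw [HW3.eval_pair, if_neg a1, if_neg a2]
  refine ⟨hfib, ?_, ?_, ?_⟩
  · intro B hB
    refine HW3.indis_of hB hmem1 hmem2 ne21 ?_
    intro x' hx' hne s
    rw [hfib] at hx'
    simp only [Set.mem_insert_iff, Set.mem_singleton_iff] at hx'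
    rcases hx' with rfl | rfl | rfl
    · exact absurd rfl hne
    · exact d12 s
    · exact d13 s
  · intro B hB
    refine HW3.indis_of hB hmem2 hmem1 (fun h => ne21 h.symm) ?_
    intro x' hx' hne s
    rw [hfib] at hx'
    simp only [Set.mem_insert_iff, Set.mem_singleton_iff] at hx'
    rcases hx' with rfl | rfl | rfl
    · exact (d12 s).symm
    · exact absurd rfl hne
    · exact d23 s
  · intro B hB
    refine HW3.indis_of hB hmem3 hmem1 (fun h => ne31 h.symm) ?_
    intro x' hx' hne s
    rw [hfib] at hx'
    simp only [Set.mem_insert_iff, Set.mem_singleton_iff] at hx'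
    rcases hx' with rfl | rfl | rfl
    · exact (d13 s).symm
    · exact (d23 s).symm
    · exact absurd rfl hne
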